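/- Let a < b be integers and f : [a,b] → ℝ be C³ on the open interval with |f‴| ≤ C. Define the composite trapezoidal rule T(f) = (f(a)+f(b))/2 + Σ_{j=a+1}^{b−1} f(j). Then |T(f) − ∫_a^b f(x) dx − (f′(b) − f′(a))/12| ≤ C(b−a)/(24π). -/

import Mathlib

open Real MeasureTheory

lemma P3_bound (u : ℝ) (h0 : 0 ≤ u) (h1 : u ≤ 1) :
    |u^3/6 - u^2/4 + u/12| ≤ 1/96 := by
  rw [abs_le]
  constructor <;> nlinarith [sq_nonneg (u - 1/2), sq_nonneg (u - 1/4), sq_nonneg (u - 3/4),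
    mul_nonneg h0 (sub_nonneg.2 h1), sq_nonneg u, sq_nonneg (1-u), mul_nonneg (mul_nonneg h0 h0) h0]

lemma interval_est (a b : ℝ) (C : ℝ) (hC : 0 < C) (f f1 f2 f3 : ℝ → ℝ)
    (hfc : ContinuousOn f (Set.Icc a b))
    (hf1c : ContinuousOn f1 (Set.Icc a b))
    (hf2c : ContinuousOn f2 (Set.Icc a b))
    (hf3c : ContinuousOn f3 (Set.Ioo a b))
    (hd1 : ∀ x ∈ Set.Ioo a b, HasDerivAt f (f1 x) x)
    (hd2 : ∀ x ∈ Set.Ioo a b, HasDerivAt f1 (f2 x) x)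
    (hd3 : ∀ x ∈ Set.Ioo a b, HasDerivAt f2 (f3 x) x)
    (hb : ∀ x ∈ Set.Ioo a b, |f3 x| ≤ C)
    (c : ℝ) (hac : a ≤ c) (hcb : c + 1 ≤ b) :
    |(f c + f (c+1))/2 - (∫ x in c..(c+1), f x) - (f1 (c+1) - f1 c)/12| ≤ C/(24*π) := by
  have hcc : c ≤ c + 1 := by linarith
  have hsub : Set.Icc c (c+1) ⊆ Set.Icc a b := Set.Icc_subset_Icc hac hcb
  have hsubo : Set.Ioo c (c+1) ⊆ Set.Ioo a b := Set.Ioo_subset_Ioo hac hcb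
  set P1 : ℝ → ℝ := fun x => x - c - 1/2 with hP1
  set P2 : ℝ → ℝ := fun x => (x-c)^2/2 - (x-c)/2 + 1/12 with hP2
  set P3 : ℝ → ℝ := fun x => (x-c)^3/6 - (x-c)^2/4 + (x-c)/12 with hP3
  have hP1c : Continuous P1 := by rw [hP1]; fun_prop
  have hP2c : Continuous P2 := by rw [hP2]; fun_prop
  have hP3c : Continuous P3 := by rw [hP3]; fun_prop
  have hP3small : ∀ x ∈ Set.Icc c (c+1), |P3 x| ≤ 1/96 := by
    intro x hx
    have := P3_bound (x - c) (by linarith [hx.1]) (by linarith [hx.2])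
    simpa [hP3] using this
  have hi_f : IntervalIntegrable f volume c (c+1) :=
    (hfc.mono hsub).intervalIntegrable_of_Icc hcc
  have hi1 : IntervalIntegrable (fun x => P1 x * f1 x) volume c (c+1) :=
    ((hP1c.continuousOn.mul (hf1c.mono hsub))).intervalIntegrable_of_Icc hcc
  have hi2 : IntervalIntegrable (fun x => P2 x * f2 x) volume c (c+1) :=
    ((hP2c.continuousOn.mul (hf2c.mono hsub))).intervalIntegrable_of_Icc hcc
  have hmeas : AEStronglyMeasurable (fun x => P3 x * f3 x)
      (volume.restrict (Set.Ioo c (c+1))) :=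
    (hP3c.continuousOn.mul (hf3c.mono hsubo)).aestronglyMeasurable measurableSet_Ioo
  have hptbd : ∀ x ∈ Set.Ioo c (c+1), ‖P3 x * f3 x‖ ≤ (1/96) * C := by
    intro x hx
    rw [norm_mul]
    exact mul_le_mul (hP3small x (Set.Ioo_subset_Icc_self hx)) (hb x (hsubo hx))
      (abs_nonneg _) (by norm_num)
  have hi3 : IntervalIntegrable (fun x => P3 x * f3 x) volume c (c+1) := by
    rw [intervalIntegrable_iff_integrableOn_Ioo_of_le hcc]
    refine ⟨hmeas, HasFiniteIntegral.restrict_of_bounded (C := (1/96) * C) (by simp) ?_⟩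
    rw [ae_restrict_iff' measurableSet_Ioo]
    exact Filter.Eventually.of_forall hptbd
  -- pointwise derivatives of the kernels
  have hdP1 : ∀ x : ℝ, HasDerivAt P1 1 x := fun x =>
    ((hasDerivAt_id x).sub_const c).sub_const (1/2 : ℝ)
  have hdP2 : ∀ x : ℝ, HasDerivAt P2 (P1 x) x := fun x => by
    have hid : HasDerivAt (fun y : ℝ => y - c) 1 x := (hasDerivAt_id x).sub_const c
    have h := (((hid.pow 2).div_const 2).sub (hid.div_const 2)).add_const (1/12 : ℝ)
    refine h.congr_deriv ?_
    simp only [hP1]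
    ring
  have hdP3 : ∀ x : ℝ, HasDerivAt P3 (P2 x) x := fun x => by
    have hid : HasDerivAt (fun y : ℝ => y - c) 1 x := (hasDerivAt_id x).sub_const c
    have h := (((hid.pow 3).div_const 6).sub ((hid.pow 2).div_const 4)).add
      (hid.div_const 12)
    refine h.congr_deriv ?_
    simp only [hP2]
    ring
  -- FTC step A
  have hA : (∫ x in c..(c+1), f x) + (∫ x in c..(c+1), P1 x * f1 x)
      = (f (c+1) + f c)/2 := by
    have h := intervalIntegral.integral_eq_sub_of_hasDerivAt_of_le hcc
      (f := fun x => P1 x * f x) (f' := fun x => f x + P1 x * f1 x)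
      (hP1c.continuousOn.mul (hfc.mono hsub))
      (fun x hx => by
        have h := (hdP1 x).mul (hd1 x (hsubo hx))
        refine h.congr_deriv ?_
        all_goals ring)
      (hi_f.add hi1)
    rw [intervalIntegral.integral_add hi_f hi1] at h
    rw [h]
    simp only [hP1]
    ring
  -- FTC step B
  have hB : (∫ x in c..(c+1), P1 x * f1 x) + (∫ x in c..(c+1), P2 x * f2 x)
      = (f1 (c+1) - f1 c)/12 := by
    have h := intervalIntegral.integral_eq_sub_of_hasDerivAt_of_le hcc
      (f := fun x => P2 x * f1 x) (f' := fun x => P1 x * f1 x + P2 x * f2 x)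
      (hP2c.continuousOn.mul (hf1c.mono hsub))
      (fun x hx => by
        have h := (hdP2 x).mul (hd2 x (hsubo hx))
        refine h.congr_deriv ?_
        all_goals ring)
      (hi1.add hi2)
    rw [intervalIntegral.integral_add hi1 hi2] at h
    rw [h]
    simp only [hP2]
    ring
  -- FTC step C
  have hCeq : (∫ x in c..(c+1), P2 x * f2 x) + (∫ x in c..(c+1), P3 x * f3 x) = 0 := by
    have h := intervalIntegral.integral_eq_sub_of_hasDerivAt_of_le hcc
      (f := fun x => P3 x * f2 x) (f' := fun x => P2 x * f2 x + P3 x * f3 x)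
      (hP3c.continuousOn.mul (hf2c.mono hsub))
      (fun x hx => by
        have h := (hdP3 x).mul (hd3 x (hsubo hx))
        refine h.congr_deriv ?_
        all_goals ring)
      (hi2.add hi3)
    rw [intervalIntegral.integral_add hi2 hi3] at h
    rw [h]
    simp only [hP3]
    ring
  -- combine: the error equals ∫ P3 f3
  have hE : (f c + f (c+1))/2 - (∫ x in c..(c+1), f x) - (f1 (c+1) - f1 c)/12
      = ∫ x in c..(c+1), P3 x * f3 x := by
    linarith [hA, hB, hCeq]
  rw [hE]
  -- bound ∫ P3 f3
  have hval : (∫ x in c..(c+1), P3 x * f3 x)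
      = ∫ x in Set.Ioo c (c+1), P3 x * f3 x := by
    rw [intervalIntegral.integral_of_le hcc, integral_Ioc_eq_integral_Ioo]
  rw [hval]
  have hnorm := norm_setIntegral_le_of_norm_le_const (μ := volume)
    (s := Set.Ioo c (c+1)) (C := (1/96) * C)
    (by simp) hptbd
  have hvol : volume.real (Set.Ioo c (c+1)) = 1 := by
    simp [Real.volume_real_Ioo]
  rw [hvol, mul_one] at hnorm
  have h1 : |∫ x in Set.Ioo c (c+1), P3 x * f3 x| ≤ (1/96) * C := hnorm
  have hpi : 24 * π ≤ 96 := by nlinarith [Real.pi_le_four]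
  have hpi0 : 0 < 24 * π := by positivity
  calc |∫ x in Set.Ioo c (c+1), P3 x * f3 x| ≤ (1/96) * C := h1
    _ = C / 96 := by ring
    _ ≤ C / (24 * π) := div_le_div_of_nonneg_left hC.le hpi0 hpi
open Real MeasureTheory

lemma tele_sum (F : ℤ → ℝ) (a : ℤ) : ∀ b : ℤ, a ≤ b →
    ∑ c ∈ Finset.Ico a b, (F (c+1) - F c) = F b - F a := by
  refine Int.le_induction ?_ ?_
  · simp
  · intro n hn ih
    have hins : Finset.Ico a (n+1) = insert n (Finset.Ico a n) := by
      ext x; simp [Finset.mem_Ico]; omega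
    rw [hins, Finset.sum_insert (by simp), ih]
    ring

lemma int_sum (f : ℝ → ℝ) (a : ℤ) : ∀ b : ℤ, a ≤ b →
    (ContinuousOn f (Set.Icc (a:ℝ) b) →
    ∑ c ∈ Finset.Ico a b, (∫ x in (c:ℝ)..((c:ℝ)+1), f x) = ∫ x in (a:ℝ)..(b:ℝ), f x) := by
  refine Int.le_induction ?_ ?_
  · intro _; simp
  · intro n hn ih hcont
    have hle : (a:ℝ) ≤ (n:ℝ) := by exact_mod_cast hn
    have hc1 : ContinuousOn f (Set.Icc (a:ℝ) n) := by
      apply hcont.mono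
      apply Set.Icc_subset_Icc le_rfl
      push_cast; linarith
    have hc2 : ContinuousOn f (Set.Icc (n:ℝ) ((n:ℝ)+1)) := by
      apply hcont.mono
      apply Set.Icc_subset_Icc hle
      push_cast; exact le_rfl
    have i1 : IntervalIntegrable f volume (a:ℝ) (n:ℝ) :=
      hc1.intervalIntegrable_of_Icc hle
    have i2 : IntervalIntegrable f volume (n:ℝ) ((n:ℝ)+1) :=
      hc2.intervalIntegrable_of_Icc (by linarith)
    have hins : Finset.Ico a (n+1) = insert n (Finset.Ico a n) := by
      ext x; simp [Finset.mem_Ico]; omega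
    rw [hins, Finset.sum_insert (by simp), ih hc1, add_comm]
    have h := intervalIntegral.integral_add_adjacent_intervals i1 i2
    rw [h]
    norm_num
open Real MeasureTheory

theorem stmt14 (a b : ℤ) (hab : a < b) (C : ℝ) (hC : 0 < C) (f : ℝ → ℝ)
    (hf2 : ContDiffOn ℝ 2 f (Set.Icc (a : ℝ) b))
    (hf3 : ContDiffOn ℝ 3 f (Set.Ioo (a : ℝ) b))
    (hbound : ∀ x ∈ Set.Ioo (a : ℝ) b,
      |iteratedDerivWithin 3 f (Set.Ioo (a : ℝ) b) x| ≤ C) :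
    |((f a + f b) / 2 + ∑ j ∈ Finset.Ioo a b, f j)
        - (∫ x in (a : ℝ)..b, f x)
        - (derivWithin f (Set.Icc (a : ℝ) b) b - derivWithin f (Set.Icc (a : ℝ) b) a) / 12|
      ≤ C * ((b : ℝ) - a) / (24 * π) := by
  have hab' : (a:ℝ) < b := by exact_mod_cast hab
  set s := Set.Icc (a:ℝ) b with hs
  set t := Set.Ioo (a:ℝ) b with ht
  have hud : UniqueDiffOn ℝ s := uniqueDiffOn_Icc hab'
  have htopen : IsOpen t := isOpen_Ioo
  have hst : t ⊆ s := Set.Ioo_subset_Icc_self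
  set f1 := derivWithin f s with hf1def
  set f2 := derivWithin f1 s with hf2def
  set f3 := iteratedDerivWithin 3 f t with hf3def
  have hfc : ContinuousOn f s := hf2.continuousOn
  have hf1cd : ContDiffOn ℝ 1 f1 s := hf2.derivWithin hud (by norm_num)
  have hf1c : ContinuousOn f1 s := hf1cd.continuousOn
  have hf2c : ContinuousOn f2 s := hf1cd.continuousOn_derivWithin hud le_rfl
  have hf3c : ContinuousOn f3 t :=
    hf3.continuousOn_iteratedDerivWithin (by norm_num) htopen.uniqueDiffOn
  have hsmem : ∀ x ∈ t, s ∈ nhds x := fun x hx => Icc_mem_nhds hx.1 hx.2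
  have htmem : ∀ x ∈ t, t ∈ nhds x := fun x hx => htopen.mem_nhds hx
  have hd1 : ∀ x ∈ t, HasDerivAt f (f1 x) x := fun x hx =>
    ((hf2.differentiableOn (by norm_num) x (hst hx)).hasDerivWithinAt).hasDerivAt (hsmem x hx)
  have hd2 : ∀ x ∈ t, HasDerivAt f1 (f2 x) x := fun x hx =>
    ((hf1cd.differentiableOn (by norm_num) x (hst hx)).hasDerivWithinAt).hasDerivAt (hsmem x hx)
  -- f2 agrees with the iterated derivative within t, on t
  have hfd3 : DifferentiableOn ℝ f t := hf3.differentiableOn (by norm_num)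
  have e_inner : ∀ y ∈ t, f1 y = derivWithin f t y := by
    intro y hy
    have h1 : deriv f y = f1 y := (hd1 y hy).deriv
    have h2 : HasDerivAt f (derivWithin f t y) y :=
      ((hfd3 y hy).hasDerivWithinAt).hasDerivAt (htmem y hy)
    rw [← h1, h2.deriv]
  have key2 : ∀ x ∈ t, f2 x = iteratedDerivWithin 2 f t x := by
    intro x hx
    have h1 : f2 x = deriv f1 x := derivWithin_of_mem_nhds (hsmem x hx)
    have h2 : iteratedDerivWithin 2 f t x = derivWithin (iteratedDerivWithin 1 f t) t x :=
      congrFun (iteratedDerivWithin_succ (n := 1)) x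
    have h3 : derivWithin (iteratedDerivWithin 1 f t) t x = deriv (iteratedDerivWithin 1 f t) x :=
      derivWithin_of_mem_nhds (htmem x hx)
    have h4 : deriv (iteratedDerivWithin 1 f t) x = deriv f1 x := by
      apply Filter.EventuallyEq.deriv_eq
      apply Filter.eventuallyEq_of_mem (htmem x hx)
      intro y hy
      rw [iteratedDerivWithin_one, ← e_inner y hy]
    rw [h1, h2, h3, h4]
  have hg2d : DifferentiableOn ℝ (iteratedDerivWithin 2 f t) t :=
    hf3.differentiableOn_iteratedDerivWithin (by norm_num) htopen.uniqueDiffOn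
  have hd3 : ∀ x ∈ t, HasDerivAt f2 (f3 x) x := by
    intro x hx
    have h := ((hg2d x hx).hasDerivWithinAt).hasDerivAt (htmem x hx)
    have hv : derivWithin (iteratedDerivWithin 2 f t) t x = f3 x :=
      (congrFun (iteratedDerivWithin_succ (n := 2)) x).symm
    rw [hv] at h
    exact h.congr_of_eventuallyEq
      (Filter.eventuallyEq_of_mem (htmem x hx) (fun y hy => key2 y hy))
  -- per-interval estimate
  have key : ∀ c : ℤ, a ≤ c → c < b →
      |(f c + f ((c:ℝ)+1))/2 - (∫ x in (c:ℝ)..((c:ℝ)+1), f x)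
        - (f1 ((c:ℝ)+1) - f1 c)/12| ≤ C/(24*π) := by
    intro c h1 h2
    have hc1 : (a:ℝ) ≤ c := by exact_mod_cast h1
    have hc2 : (c:ℝ) + 1 ≤ b := by exact_mod_cast (by omega : c + 1 ≤ b)
    exact interval_est (a:ℝ) (b:ℝ) C hC f f1 f2 f3 hfc hf1c hf2c hf3c hd1 hd2 hd3
      hbound (c:ℝ) hc1 hc2
  set E : ℤ → ℝ := fun c => (f c + f ((c:ℝ)+1))/2 - (∫ x in (c:ℝ)..((c:ℝ)+1), f x)
    - (f1 ((c:ℝ)+1) - f1 c)/12 with hE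
  have hsum1 : ∑ c ∈ Finset.Ico a b, ((f c + f ((c:ℝ)+1))/2)
      = (f a + f b)/2 + ∑ j ∈ Finset.Ioo a b, f j := by
    have h1 : ∀ c : ℤ, (f c + f ((c:ℝ)+1))/2
        = f c + ((fun k : ℤ => f k / 2) (c+1) - (fun k : ℤ => f k / 2) c) := by
      intro c; push_cast; ring
    rw [Finset.sum_congr rfl (fun c _ => h1 c), Finset.sum_add_distrib,
      tele_sum (fun k : ℤ => f k / 2) a b hab.le]
    have hins : Finset.Ico a b = insert a (Finset.Ioo a b) := by
      ext x; simp [Finset.mem_Ico, Finset.mem_Ioo]; omega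
    rw [hins, Finset.sum_insert (by simp)]
    ring
  have hsum2 : ∑ c ∈ Finset.Ico a b, (∫ x in (c:ℝ)..((c:ℝ)+1), f x)
      = ∫ x in (a:ℝ)..(b:ℝ), f x := int_sum f a b hab.le hfc
  have hsum3 : ∑ c ∈ Finset.Ico a b, ((f1 ((c:ℝ)+1) - f1 c)/12)
      = (f1 b - f1 a)/12 := by
    have h1 : ∀ c : ℤ, (f1 ((c:ℝ)+1) - f1 c)/12
        = (fun k : ℤ => f1 k / 12) (c+1) - (fun k : ℤ => f1 k / 12) c := by
      intro c; push_cast; ring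
    rw [Finset.sum_congr rfl (fun c _ => h1 c),
      tele_sum (fun k : ℤ => f1 k / 12) a b hab.le]
    ring
  have hmain : ((f a + f b)/2 + ∑ j ∈ Finset.Ioo a b, f j) - (∫ x in (a:ℝ)..b, f x)
      - (f1 b - f1 a)/12 = ∑ c ∈ Finset.Ico a b, E c := by
    have h : ∑ c ∈ Finset.Ico a b, E c
        = (∑ c ∈ Finset.Ico a b, ((f c + f ((c:ℝ)+1))/2))
          - (∑ c ∈ Finset.Ico a b, (∫ x in (c:ℝ)..((c:ℝ)+1), f x))
          - (∑ c ∈ Finset.Ico a b, ((f1 ((c:ℝ)+1) - f1 c)/12)) := by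
      simp only [hE, Finset.sum_sub_distrib]
    rw [h, hsum1, hsum2, hsum3]
  rw [hmain]
  have hcard : ((Finset.Ico a b).card : ℝ) = (b:ℝ) - a := by
    rw [Int.card_Ico]
    have : (0:ℤ) ≤ b - a := by omega
    have h2 : (((b - a).toNat : ℤ) : ℝ) = (b:ℝ) - a := by
      rw [Int.toNat_of_nonneg this]; push_cast; ring
    exact_mod_cast h2
  calc |∑ c ∈ Finset.Ico a b, E c| ≤ ∑ c ∈ Finset.Ico a b, |E c| :=
        Finset.abs_sum_le_sum_abs _ _
    _ ≤ ∑ _c ∈ Finset.Ico a b, C/(24*π) :=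
        Finset.sum_le_sum (fun c hc =>
          key c (Finset.mem_Ico.1 hc).1 (Finset.mem_Ico.1 hc).2)
    _ = ((Finset.Ico a b).card : ℝ) * (C/(24*π)) := by
        rw [Finset.sum_const, nsmul_eq_mul]
    _ = C * ((b:ℝ) - a)/(24*π) := by rw [hcard]; ring
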